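/- arXiv:0808.0440 — 2 statements merged into one kernel-verified Lean document; each statement's English description precedes it below -/
import Mathlib

section
/- Let G = {(t₁, t₂, c) ∈ Circle³ : c² t₁ = 1} (the lift group for j₁ = 1, j₂ = 0). The map ψ : Circle² → Circle³, ψ(τ₁, τ₂) = (τ₁², τ₂, τ₁⁻¹), is an injective continuous group homomorphism with image exactly G, hence a topological group isomorphism Circle² ≅ G, and the composition of ψ with the projection (t₁,t₂,c) ↦ (t₁,t₂) equals (τ₁, τ₂) ↦ (τ₁², τ₂). -/
private noncomputable def psi10 : Circle × Circle →* Circle × Circle × Circle where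
  toFun τ := (τ.1 ^ 2, τ.2, τ.1⁻¹)
  map_one' := by simp
  map_mul' a b := by
    simp [Prod.ext_iff, mul_pow, mul_inv, mul_comm]

private lemma psi10_inj : Function.Injective psi10 := by
  intro a b h
  simp only [psi10, MonoidHom.coe_mk, OneHom.coe_mk, Prod.ext_iff] at h
  exact Prod.ext (inv_injective h.2.2) h.2.1

private lemma psi10_cont : Continuous psi10 := by
  refine Continuous.prodMk ?_ (Continuous.prodMk ?_ ?_)
  · exact (continuous_fst.pow 2)
  · exact continuous_snd
  · exact continuous_fst.inv

private lemma psi10_range :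
    Set.range psi10 = {p : Circle × Circle × Circle | p.2.2 ^ 2 * p.1 = 1} := by
  ext p
  constructor
  · rintro ⟨τ, rfl⟩
    simp [psi10]
  · rintro h
    refine ⟨(p.2.2⁻¹, p.2.1), ?_⟩
    have h1 : (p.2.2⁻¹) ^ 2 = p.1 := by
      have : p.1 = (p.2.2 ^ 2)⁻¹ := by
        rw [eq_inv_iff_mul_eq_one, mul_comm]; exact h
      rw [this, inv_pow]
    simp [psi10, h1]

/-- The map `ψ(τ₁,τ₂) = (τ₁², τ₂, τ₁⁻¹)` is an injective continuous group homomorphism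
of `Circle²` onto the lift group `G = {(t₁,t₂,c) : c² t₁ = 1}` (the case `j₁ = 1, j₂ = 0`),
hence a topological group isomorphism `Circle² ≅ G`, and composing `ψ` with the
projection `(t₁,t₂,c) ↦ (t₁,t₂)` gives `(τ₁,τ₂) ↦ (τ₁², τ₂)`. -/
theorem lift_group_j10_is_torus :
    ∃ G : Subgroup (Circle × Circle × Circle),
      (G : Set (Circle × Circle × Circle)) = {p | p.2.2 ^ 2 * p.1 = 1} ∧
      ∃ ψ : Circle × Circle →* Circle × Circle × Circle,
        (∀ τ₁ τ₂ : Circle, ψ (τ₁, τ₂) = (τ₁ ^ 2, τ₂, τ₁⁻¹)) ∧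
        Function.Injective ψ ∧ Continuous ψ ∧
        Set.range ψ = (G : Set (Circle × Circle × Circle)) ∧
        (∃ e : (Circle × Circle) ≃* G,
          Continuous e ∧ Continuous e.symm ∧
          ∀ τ : Circle × Circle, (e τ : Circle × Circle × Circle) = ψ τ) ∧
        ∀ τ₁ τ₂ : Circle,
          ((ψ (τ₁, τ₂)).1, (ψ (τ₁, τ₂)).2.1) = (τ₁ ^ 2, τ₂) := by
  refine ⟨psi10.range, ?_, psi10, fun τ₁ τ₂ => rfl, psi10_inj, psi10_cont, ?_, ?_, fun τ₁ τ₂ => rfl⟩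
  · rw [MonoidHom.coe_range, psi10_range]
  · rw [MonoidHom.coe_range]
  · -- the topological group isomorphism
    have hsurj : Function.Surjective psi10.rangeRestrict := psi10.rangeRestrict_surjective
    have hinj : Function.Injective psi10.rangeRestrict := by
      intro a b h
      exact psi10_inj (congrArg Subtype.val h)
    refine ⟨MulEquiv.ofBijective psi10.rangeRestrict ⟨hinj, hsurj⟩, ?_, ?_, fun τ => rfl⟩
    · exact Continuous.subtype_mk psi10_cont _
    · set e := MulEquiv.ofBijective psi10.rangeRestrict ⟨hinj, hsurj⟩ with he
      have hsymm : ∀ g : psi10.range,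
          e.symm g = (((g : Circle × Circle × Circle).2.2)⁻¹,
                      (g : Circle × Circle × Circle).2.1) := by
        intro g
        apply e.injective
        rw [e.apply_symm_apply]
        obtain ⟨τ, hτ⟩ := g.2
        apply Subtype.ext
        have : (e (((g : Circle × Circle × Circle).2.2)⁻¹,
            (g : Circle × Circle × Circle).2.1) : Circle × Circle × Circle)
            = psi10 (((g : Circle × Circle × Circle).2.2)⁻¹,
            (g : Circle × Circle × Circle).2.1) := rfl
        rw [this, ← hτ]
        simp [psi10]
      have : Continuous fun g : psi10.range =>
          ((((g : Circle × Circle × Circle).2.2)⁻¹,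
            (g : Circle × Circle × Circle).2.1) : Circle × Circle) := by
        fun_prop
      exact (continuous_congr fun g => (hsymm g).symm).mp this
end

section
/- Fix θ ∈ ℝ and let H = ℓ²(ℤ²). Define unitary operators U, V, W on H by (U f)(m,n) = f(m−1, n), (V f)(m,n) = e^{iπθ m} f(m, n−1), and (W f)(m,n) = (−1)^m f(m,n). Let A be the C*-subalgebra of bounded operators on H generated by {U, V}. Then W U W⁻¹ = −U and W V W⁻¹ = V, so conjugation by W restricts to a *-automorphism of A of order 2, and the C*-subalgebra of A generated by {U², V} equals the fixed-point subalgebra {a ∈ A : W a W⁻¹ = a}. -/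
open Real

set_option maxHeartbeats 10000000
set_option synthInstance.maxHeartbeats 1000000

noncomputable abbrev OpAlg : Type :=
  lp (fun _ : ℤ × ℤ => ℂ) 2 →L[ℂ] lp (fun _ : ℤ × ℤ => ℂ) 2

section ConjAux
variable {A : Type*} [Semiring A] [StarRing A] [Algebra ℂ A] [StarModule ℂ A]

/-- Conjugation by a self-adjoint involution `W` as a ⋆-algebra automorphism of an
invariant star subalgebra. -/
def conjStarAlgEquiv (W : A) (hW1 : W * W = 1) (hstarW : star W = W)
    (S : StarSubalgebra ℂ A) (hS : ∀ a ∈ S, W * a * W ∈ S) : S ≃⋆ₐ[ℂ] S where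
  toFun a := ⟨W * ↑a * W, hS _ a.2⟩
  invFun a := ⟨W * ↑a * W, hS _ a.2⟩
  left_inv a := Subtype.ext (by
    show W * (W * ↑a * W) * W = (a : A)
    simp only [← mul_assoc, hW1, one_mul]
    rw [mul_assoc, hW1, mul_one])
  right_inv a := Subtype.ext (by
    show W * (W * ↑a * W) * W = (a : A)
    simp only [← mul_assoc, hW1, one_mul]
    rw [mul_assoc, hW1, mul_one])
  map_mul' a b := Subtype.ext (by
    show W * (↑a * ↑b) * W = (W * ↑a * W) * (W * ↑b * W)
    have : ∀ x : A, x * W * W = x := fun x => by rw [mul_assoc, hW1, mul_one]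
    simp only [← mul_assoc, this])
  map_add' a b := Subtype.ext (by
    show W * (↑a + ↑b) * W = W * ↑a * W + W * ↑b * W
    rw [mul_add, add_mul])
  map_star' a := Subtype.ext (by
    show W * star (↑a : A) * W = star (W * ↑a * W)
    simp only [star_mul, hstarW, ← mul_assoc])
  map_smul' r a := Subtype.ext (by
    show W * (r • (↑a : A)) * W = r • (W * ↑a * W)
    rw [mul_smul_comm, smul_mul_assoc])

theorem conjStarAlgEquiv_coe (W : A) (hW1 : W * W = 1) (hstarW : star W = W)
    (S : StarSubalgebra ℂ A) (hS : ∀ a ∈ S, W * a * W ∈ S) (a : S) :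
    (conjStarAlgEquiv W hW1 hstarW S hS a : A) = W * ↑a * W := rfl

theorem conjStarAlgEquiv_invol (W : A) (hW1 : W * W = 1) (hstarW : star W = W)
    (S : StarSubalgebra ℂ A) (hS : ∀ a ∈ S, W * a * W ∈ S) (a : S) :
    conjStarAlgEquiv W hW1 hstarW S hS (conjStarAlgEquiv W hW1 hstarW S hS a) = a :=
  (conjStarAlgEquiv W hW1 hstarW S hS).left_inv a

end ConjAux


/-- On `H = ℓ²(ℤ²)`, let `U, V, W` be the unitaries
`(U f)(m,n) = f(m-1,n)`, `(V f)(m,n) = e^{iπθm} f(m,n-1)`, `(W f)(m,n) = (-1)^m f(m,n)`,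
and let `A = C*(U, V)`. Then `W U W⁻¹ = -U` and `W V W⁻¹ = V`, conjugation by `W`
restricts to a `*`-automorphism of `A` of order 2, and the C*-subalgebra of `A`
generated by `U², V` is exactly its fixed-point subalgebra. -/
theorem noncommutative_double_cover_fixed_points
    (θ : ℝ)
    (U V W : lp (fun _ : ℤ × ℤ => ℂ) 2 →L[ℂ] lp (fun _ : ℤ × ℤ => ℂ) 2)
    (hUu : U ∈ unitary (lp (fun _ : ℤ × ℤ => ℂ) 2 →L[ℂ] lp (fun _ : ℤ × ℤ => ℂ) 2))
    (hVu : V ∈ unitary (lp (fun _ : ℤ × ℤ => ℂ) 2 →L[ℂ] lp (fun _ : ℤ × ℤ => ℂ) 2))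
    (hWu : W ∈ unitary (lp (fun _ : ℤ × ℤ => ℂ) 2 →L[ℂ] lp (fun _ : ℤ × ℤ => ℂ) 2))
    (hUdef : ∀ (f : lp (fun _ : ℤ × ℤ => ℂ) 2) (m n : ℤ), (U f) (m, n) = f (m - 1, n))
    (hVdef : ∀ (f : lp (fun _ : ℤ × ℤ => ℂ) 2) (m n : ℤ),
      (V f) (m, n) = Complex.exp (Complex.I * (π : ℂ) * (θ : ℂ) * (m : ℂ)) * f (m, n - 1))
    (hWdef : ∀ (f : lp (fun _ : ℤ × ℤ => ℂ) 2) (m n : ℤ),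
      (W f) (m, n) = (-1 : ℂ) ^ m * f (m, n)) :
    W * U * star W = -U ∧
    W * V * star W = V ∧
    (∃ Φ : (StarAlgebra.adjoin ℂ
          ({U, V} : Set (lp (fun _ : ℤ × ℤ => ℂ) 2 →L[ℂ] lp (fun _ : ℤ × ℤ => ℂ) 2))).topologicalClosure ≃⋆ₐ[ℂ]
        (StarAlgebra.adjoin ℂ
          ({U, V} : Set (lp (fun _ : ℤ × ℤ => ℂ) 2 →L[ℂ] lp (fun _ : ℤ × ℤ => ℂ) 2))).topologicalClosure,
      (∀ a, (Φ a : lp (fun _ : ℤ × ℤ => ℂ) 2 →L[ℂ] lp (fun _ : ℤ × ℤ => ℂ) 2) =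
        W * (a : lp (fun _ : ℤ × ℤ => ℂ) 2 →L[ℂ] lp (fun _ : ℤ × ℤ => ℂ) 2) * star W) ∧
      (∀ a, Φ (Φ a) = a)) ∧
    ((StarAlgebra.adjoin ℂ
        ({U ^ 2, V} : Set (lp (fun _ : ℤ × ℤ => ℂ) 2 →L[ℂ] lp (fun _ : ℤ × ℤ => ℂ) 2))).topologicalClosure :
        Set (lp (fun _ : ℤ × ℤ => ℂ) 2 →L[ℂ] lp (fun _ : ℤ × ℤ => ℂ) 2)) =
      {a | a ∈ (StarAlgebra.adjoin ℂ
          ({U, V} : Set (lp (fun _ : ℤ × ℤ => ℂ) 2 →L[ℂ] lp (fun _ : ℤ × ℤ => ℂ) 2))).topologicalClosure ∧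
        W * a * star W = a} := by
  -- extensionality principle
  have hext : ∀ {S T : OpAlg}, (∀ f m n, (S f) (m, n) = (T f) (m, n)) → S = T := by
    intro S T h
    ext f p
    obtain ⟨m, n⟩ := p
    exact h f m n
  -- basic operator identities
  have hW1 : W * W = 1 := by
    apply hext
    intro f m n
    simp only [ContinuousLinearMap.mul_apply, hWdef, ContinuousLinearMap.one_apply, ← mul_assoc,
      ← mul_zpow]
    norm_num
  have hWU : W * U = -(U * W) := by
    apply hext
    intro f m n
    simp only [ContinuousLinearMap.mul_apply, hWdef, hUdef, ContinuousLinearMap.neg_apply,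
      lp.coeFn_neg, Pi.neg_apply]
    rw [zpow_sub₀ (by norm_num : (-1:ℂ) ≠ 0)]
    ring
  have hWV : W * V = V * W := by
    apply hext
    intro f m n
    simp only [ContinuousLinearMap.mul_apply, hWdef, hVdef]
    ring
  have hVU : V * U = Complex.exp (Complex.I * (π:ℂ) * (θ:ℂ)) • (U * V) := by
    apply hext
    intro f m n
    simp only [ContinuousLinearMap.mul_apply, hVdef, hUdef, ContinuousLinearMap.smul_apply,
      lp.coeFn_smul, Pi.smul_apply, smul_eq_mul, ← mul_assoc, ← Complex.exp_add]
    congr 1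
    push_cast
    ring
  have hU1 : U * star U = 1 := (Unitary.mem_iff.mp hUu).2
  have hU1' : star U * U = 1 := (Unitary.mem_iff.mp hUu).1
  have hstarW : star W = W := by
    have h1 : star W * W = 1 := (Unitary.mem_iff.mp hWu).1
    calc star W = star W * (W * W) := by rw [hW1, mul_one]
    _ = (star W * W) * W := by rw [mul_assoc]
    _ = W := by rw [h1, one_mul]
  -- cancellation helpers
  have hcU : ∀ x : OpAlg, x * U * star U = x := fun x => by rw [mul_assoc, hU1, mul_one]
  have hcU' : ∀ x : OpAlg, x * star U * U = x := fun x => by rw [mul_assoc, hU1', mul_one]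
  have hcW : ∀ x : OpAlg, x * W * W = x := fun x => by rw [mul_assoc, hW1, mul_one]
  -- membership of generators
  have hU2B : U ^ 2 ∈ StarAlgebra.adjoin ℂ ({U ^ 2, V} : Set OpAlg) :=
    StarAlgebra.subset_adjoin ℂ _ (Set.mem_insert _ _)
  have hVB : V ∈ StarAlgebra.adjoin ℂ ({U ^ 2, V} : Set OpAlg) :=
    StarAlgebra.subset_adjoin ℂ _ (Set.mem_insert_of_mem _ rfl)
  -- conjugation by U preserves B = adjoin {U², V}
  have hψ : ∀ a ∈ StarAlgebra.adjoin ℂ ({U ^ 2, V} : Set OpAlg),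
      star U * a * U ∈ StarAlgebra.adjoin ℂ ({U ^ 2, V} : Set OpAlg) := by
    intro a ha
    induction ha using StarAlgebra.adjoin_induction with
    | mem x hx =>
      rcases hx with rfl | hx
      · have h : star U * U ^ 2 * U = U ^ 2 := by
          simp only [sq, ← mul_assoc, hU1', one_mul]
        rw [h]; exact hU2B
      · rw [Set.mem_singleton_iff] at hx
        rw [hx]
        have h : star U * V * U = Complex.exp (Complex.I * (π:ℂ) * (θ:ℂ)) • V := by
          rw [mul_assoc, hVU, mul_smul_comm, ← mul_assoc, hU1', one_mul]
        rw [h, Algebra.smul_def]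
        exact mul_mem (algebraMap_mem _ _) hVB
    | algebraMap r =>
      have h : star U * algebraMap ℂ OpAlg r * U = algebraMap ℂ OpAlg r := by
        rw [Algebra.algebraMap_eq_smul_one, mul_smul_comm, mul_one, smul_mul_assoc, hU1']
      rw [h]; exact algebraMap_mem _ r
    | add x y hx hy px py =>
      have h : star U * (x + y) * U = star U * x * U + star U * y * U := by
        rw [mul_add, add_mul]
      rw [h]; exact add_mem px py
    | mul x y hx hy px py =>
      have h : star U * (x * y) * U = (star U * x * U) * (star U * y * U) := by
        simp only [← mul_assoc, hcU]
      rw [h]; exact mul_mem px py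
    | star x hx px =>
      have h : star U * star x * U = star (star U * x * U) := by
        simp only [star_mul, star_star, ← mul_assoc]
      rw [h]; exact star_mem px
  -- conjugation by W fixes B pointwise
  have hWfix : ∀ b ∈ StarAlgebra.adjoin ℂ ({U ^ 2, V} : Set OpAlg), W * b * W = b := by
    intro b hb
    induction hb using StarAlgebra.adjoin_induction with
    | mem x hx =>
      rcases hx with rfl | hx
      · have h1 : W * U ^ 2 * W = (W * U) * (U * W) := by simp only [sq, mul_assoc]
        rw [h1, hWU, neg_mul]
        have h2 : (U * W) * (U * W) = U * (W * U) * W := by simp only [mul_assoc]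
        rw [h2, hWU, mul_neg, neg_mul, neg_neg, sq]
        simp only [mul_assoc, hW1, mul_one]
      · rw [Set.mem_singleton_iff] at hx
        rw [hx, hWV, hcW]
    | algebraMap r =>
      rw [Algebra.algebraMap_eq_smul_one, mul_smul_comm, mul_one, smul_mul_assoc, hW1]
    | add x y hx hy px py => rw [mul_add, add_mul, px, py]
    | mul x y hx hy px py =>
      have h : W * (x * y) * W = (W * x * W) * (W * y * W) := by
        simp only [← mul_assoc, hcW]
      rw [h, px, py]
    | star x hx px =>
      have h : W * star x * W = star (W * x * W) := by
        simp only [star_mul, hstarW, ← mul_assoc]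
      rw [h, px]
  -- conjugation by W preserves A = adjoin {U, V}
  have hconjA : ∀ a ∈ StarAlgebra.adjoin ℂ ({U, V} : Set OpAlg),
      W * a * W ∈ StarAlgebra.adjoin ℂ ({U, V} : Set OpAlg) := by
    intro a ha
    have hUA : U ∈ StarAlgebra.adjoin ℂ ({U, V} : Set OpAlg) :=
      StarAlgebra.subset_adjoin ℂ _ (Set.mem_insert _ _)
    have hVA : V ∈ StarAlgebra.adjoin ℂ ({U, V} : Set OpAlg) :=
      StarAlgebra.subset_adjoin ℂ _ (Set.mem_insert_of_mem _ rfl)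
    induction ha using StarAlgebra.adjoin_induction with
    | mem x hx =>
      rcases hx with rfl | hx
      · rw [hWU, neg_mul, hcW]; exact neg_mem hUA
      · rw [Set.mem_singleton_iff] at hx
        rw [hx, hWV, hcW]; exact hVA
    | algebraMap r =>
      rw [Algebra.algebraMap_eq_smul_one, mul_smul_comm, mul_one, smul_mul_assoc, hW1]
      exact algebraMap_mem _ r
    | add x y hx hy px py => rw [mul_add, add_mul]; exact add_mem px py
    | mul x y hx hy px py =>
      have h : W * (x * y) * W = (W * x * W) * (W * y * W) := by
        simp only [← mul_assoc, hcW]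
      rw [h]; exact mul_mem px py
    | star x hx px =>
      have h : W * star x * W = star (W * x * W) := by
        simp only [star_mul, hstarW, ← mul_assoc]
      rw [h]; exact star_mem px
  -- the even–odd decomposition
  have hdecomp : ∀ a ∈ StarAlgebra.adjoin ℂ ({U, V} : Set OpAlg),
      ∃ b ∈ StarAlgebra.adjoin ℂ ({U ^ 2, V} : Set OpAlg),
      ∃ c ∈ StarAlgebra.adjoin ℂ ({U ^ 2, V} : Set OpAlg), a = b + U * c := by
    intro a ha
    induction ha using StarAlgebra.adjoin_induction with
    | mem x hx =>
      rcases hx with rfl | hx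
      · exact ⟨0, zero_mem _, 1, one_mem _, by simp⟩
      · rw [Set.mem_singleton_iff] at hx
        rw [hx]
        exact ⟨V, hVB, 0, zero_mem _, by simp⟩
    | algebraMap r =>
      exact ⟨algebraMap ℂ OpAlg r, algebraMap_mem _ r, 0, zero_mem _, by simp⟩
    | add x y hx hy px py =>
      obtain ⟨b₁, hb₁, c₁, hc₁, rfl⟩ := px
      obtain ⟨b₂, hb₂, c₂, hc₂, rfl⟩ := py
      exact ⟨b₁ + b₂, add_mem hb₁ hb₂, c₁ + c₂, add_mem hc₁ hc₂, by rw [mul_add]; abel⟩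
    | mul x y hx hy px py =>
      obtain ⟨b₁, hb₁, c₁, hc₁, rfl⟩ := px
      obtain ⟨b₂, hb₂, c₂, hc₂, rfl⟩ := py
      refine ⟨b₁ * b₂ + (U * U) * ((star U * c₁ * U) * c₂),
        add_mem (mul_mem hb₁ hb₂) (mul_mem (by rw [← sq]; exact hU2B) (mul_mem (hψ c₁ hc₁) hc₂)),
        (star U * b₁ * U) * c₂ + c₁ * b₂,
        add_mem (mul_mem (hψ b₁ hb₁) hc₂) (mul_mem hc₁ hb₂), ?_⟩
      simp only [mul_add, add_mul, ← mul_assoc, hcU, hU1, one_mul]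
      abel
    | star x hx px =>
      obtain ⟨b, hb, c, hc, rfl⟩ := px
      refine ⟨star b, star_mem hb, (star U * star c * U) * (star U * star U),
        mul_mem (hψ _ (star_mem hc)) (by rw [← star_mul, ← sq]; exact star_mem hU2B), ?_⟩
      simp only [star_add, star_mul, ← mul_assoc, hcU, hU1, one_mul]
  -- continuity of conjugation
  have hcont : Continuous fun x : OpAlg => W * x * W :=
    (continuous_const.mul continuous_id).mul continuous_const
  -- conjugation by W preserves the closure of A
  have hcA : ∀ a ∈ (StarAlgebra.adjoin ℂ ({U, V} : Set OpAlg)).topologicalClosure,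
      W * a * W ∈ (StarAlgebra.adjoin ℂ ({U, V} : Set OpAlg)).topologicalClosure := by
    intro a ha
    rw [← SetLike.mem_coe, StarSubalgebra.topologicalClosure_coe] at ha ⊢
    exact map_mem_closure (f := fun x : OpAlg => W * x * W) hcont ha fun x hx => hconjA x hx
  refine ⟨by rw [hstarW, hWU, neg_mul, hcW], by rw [hstarW, hWV, hcW], ?_, ?_⟩
  · -- the order-two automorphism
    exact ⟨conjStarAlgEquiv W hW1 hstarW _ hcA,
      fun a => by rw [hstarW]; exact conjStarAlgEquiv_coe W hW1 hstarW _ hcA a,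
      conjStarAlgEquiv_invol W hW1 hstarW _ hcA⟩
  · -- the fixed-point algebra
    ext a
    simp only [Set.mem_setOf_eq, SetLike.mem_coe, StarSubalgebra.topologicalClosure_coe]
    constructor
    · intro ha
      have hBleA : StarAlgebra.adjoin ℂ ({U ^ 2, V} : Set OpAlg) ≤
          StarAlgebra.adjoin ℂ ({U, V} : Set OpAlg) := by
        apply StarAlgebra.adjoin_le
        rintro x (rfl | rfl)
        · exact pow_mem (StarAlgebra.subset_adjoin ℂ _ (Set.mem_insert _ _)) 2
        · exact StarAlgebra.subset_adjoin ℂ _ (Set.mem_insert_of_mem _ rfl)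
      constructor
      · rw [← SetLike.mem_coe, StarSubalgebra.topologicalClosure_coe]
        exact closure_mono (fun x hx => hBleA hx) ha
      · rw [hstarW]
        have hFclosed : IsClosed {x : OpAlg | W * x * W = x} := isClosed_eq hcont continuous_id
        exact closure_minimal (fun x hx => hWfix x hx) hFclosed ha
    · rintro ⟨ha, hfix⟩
      rw [hstarW] at hfix
      rw [← SetLike.mem_coe, StarSubalgebra.topologicalClosure_coe] at ha
      have hE : ∀ x ∈ (StarAlgebra.adjoin ℂ ({U, V} : Set OpAlg) : Set OpAlg),
          (2⁻¹ : ℂ) • (x + W * x * W) ∈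
            (StarAlgebra.adjoin ℂ ({U ^ 2, V} : Set OpAlg) : Set OpAlg) := by
        intro x hx
        obtain ⟨b, hb, c, hc, rfl⟩ := hdecomp x hx
        have h2 : W * (U * c) * W = -(U * c) := by
          rw [show W * (U * c) * W = (W * U) * (c * W) from by simp only [mul_assoc],
            hWU, show (-(U * W)) * (c * W) = -(U * (W * c * W)) from by
              simp only [neg_mul, mul_assoc], hWfix c hc]
        rw [mul_add, add_mul, hWfix b hb, h2]
        have h3 : (b + U * c) + (b + -(U * c)) = (2 : ℂ) • b := by
          rw [two_smul]; abel
        rw [h3, smul_smul]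
        have h4 : (2⁻¹ : ℂ) * 2 = 1 := by norm_num
        rw [h4, one_smul]
        exact hb
      have hEcont : Continuous fun x : OpAlg => (2⁻¹ : ℂ) • (x + W * x * W) :=
        Continuous.const_smul (g := fun x : OpAlg => x + W * x * W) (continuous_id.add hcont) (2⁻¹ : ℂ)
      have hmem : (2⁻¹ : ℂ) • (a + W * a * W) ∈
          closure (StarAlgebra.adjoin ℂ ({U ^ 2, V} : Set OpAlg) : Set OpAlg) :=
        map_mem_closure (f := fun x : OpAlg => (2⁻¹ : ℂ) • (x + W * x * W)) hEcont ha hE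
      have heq : (2⁻¹ : ℂ) • (a + a) = a := by
        rw [← two_smul ℂ, smul_smul]
        norm_num
      rwa [hfix, heq] at hmem
end
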